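/- Let A be a Lie group acting on a smooth manifold X with regular measures, and suppose a regular measure dx on X is χ-equivariant, i.e. g_*dx = χ(g)dx for a positive multiplicative character χ : A → ℝ₊. Then for every x ∈ X and every g in the stabilizer A^x, one has χ(g)⁻¹ = |det(Ad g acting on 𝔞/𝔞^x)|, where 𝔞^x is the Lie algebra of A^x. -/

import Mathlib

open MeasureTheory

/-- If two nonnegative continuous functions have equal Lebesgue integrals over all closed balls
around `x`, then they agree at `x` (one-sided version). -/
lemma le_of_forall_lintegral_closedBall_eq {m : ℕ} (u v : (Fin m → ℝ) → ℝ)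
    (hu : Continuous u) (hv : Continuous v)
    (hv0 : ∀ y, 0 ≤ v y)
    (x : Fin m → ℝ)
    (hk : ∀ r : ℝ, 0 < r →
      (∫⁻ y in Metric.closedBall x r, ENNReal.ofReal (u y)) =
      ∫⁻ y in Metric.closedBall x r, ENNReal.ofReal (v y)) :
    u x ≤ v x := by
  by_contra hlt
  push_neg at hlt
  set ε : ℝ := (u x - v x) / 2 with hε
  have hεpos : 0 < ε := by simp only [hε]; linarith
  -- find a ball on which `v + ε ≤ u`
  have hopen : IsOpen ((fun y => u y - v y) ⁻¹' Set.Ioi ε) :=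
    (hu.sub hv).isOpen_preimage _ isOpen_Ioi
  have hxmem : x ∈ (fun y => u y - v y) ⁻¹' Set.Ioi ε := by
    simp only [Set.mem_preimage, Set.mem_Ioi, hε]; linarith
  obtain ⟨r, hr, hball⟩ := Metric.isOpen_iff.1 hopen x hxmem
  set B := Metric.closedBall x (r / 2) with hB
  have hBsub : B ⊆ (fun y => u y - v y) ⁻¹' Set.Ioi ε := fun y hy => by
    have h1 := Metric.mem_closedBall.1 hy
    exact hball (Metric.mem_ball.2 (by linarith))
  have hBle : ∀ y ∈ B, v y + ε ≤ u y := by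
    intro y hy
    have := hBsub hy
    simp only [Set.mem_preimage, Set.mem_Ioi] at this
    linarith
  -- the integral of `v` over `B` is finite
  have hBne : (x : Fin m → ℝ) ∈ B := Metric.mem_closedBall_self (by linarith)
  obtain ⟨z, hzB, hzmax'⟩ := (isCompact_closedBall x (r / 2)).exists_isMaxOn ⟨x, hBne⟩
    hv.continuousOn
  have hzmax : ∀ y ∈ B, v y ≤ v z := fun y hy => hzmax' hy
  have hfin : (∫⁻ y in B, ENNReal.ofReal (v y)) < ⊤ := by
    calc (∫⁻ y in B, ENNReal.ofReal (v y))
        ≤ ∫⁻ _ in B, ENNReal.ofReal (v z) :=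
          setLIntegral_mono measurable_const
            (fun y hy => ENNReal.ofReal_le_ofReal (hzmax y hy))
      _ = ENNReal.ofReal (v z) * volume B := setLIntegral_const _ _
      _ < ⊤ := ENNReal.mul_lt_top ENNReal.ofReal_lt_top measure_closedBall_lt_top
  have hvolpos : 0 < volume B := Metric.measure_closedBall_pos volume x (by linarith)
  -- compare integrals
  have hkey : (∫⁻ y in B, ENNReal.ofReal (v y)) + ENNReal.ofReal ε * volume B
      ≤ ∫⁻ y in B, ENNReal.ofReal (v y) := by
    calc (∫⁻ y in B, ENNReal.ofReal (v y)) + ENNReal.ofReal ε * volume B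
        = ∫⁻ y in B, (ENNReal.ofReal (v y) + ENNReal.ofReal ε) := by
          rw [lintegral_add_right _ measurable_const, setLIntegral_const]
      _ ≤ ∫⁻ y in B, ENNReal.ofReal (u y) := by
          refine setLIntegral_mono (hu.measurable.ennreal_ofReal) (fun y hy => ?_)
          rw [← ENNReal.ofReal_add (hv0 y) hεpos.le]
          exact ENNReal.ofReal_le_ofReal (hBle y hy)
      _ = ∫⁻ y in B, ENNReal.ofReal (v y) := hk (r / 2) (by linarith)
  have : ENNReal.ofReal ε * volume B ≤ 0 := by
    have h0 : (∫⁻ y in B, ENNReal.ofReal (v y)) + ENNReal.ofReal ε * volume B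
        ≤ (∫⁻ y in B, ENNReal.ofReal (v y)) + 0 := by simpa using hkey
    exact (ENNReal.add_le_add_iff_left hfin.ne).1 h0
  have hpos : 0 < ENNReal.ofReal ε * volume B :=
    ENNReal.mul_pos (by simp [ENNReal.ofReal_pos.2 hεpos, ne_of_gt]) hvolpos.ne'
  exact absurd this (not_le.2 hpos)

/-- Necessity of the equivariance condition: if a group `A` acts smoothly on `X = ℝ^m` and a
regular measure `dx = ρ dλ` (with `ρ` a positive continuous density) is `χ`-equivariant, i.e.
`g_* dx = χ(g) dx`, then for every point `x` and every `g` in the stabilizer of `x` one has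
`χ(g)⁻¹ = |det D(act g)(x)|`.  (The differential at the fixed point realizes the action of
`Ad g` on the tangent space `𝔞/𝔞^x`.) -/
theorem equivariant_measure_stabilizer_det (m : ℕ) {A : Type*} [Group A]
    (act : A → (Fin m → ℝ) → (Fin m → ℝ))
    (hact_one : act 1 = id)
    (hact_mul : ∀ g h : A, act (g * h) = act g ∘ act h)
    (hact_smooth : ∀ g : A, ContDiff ℝ 1 (act g))
    (ρ : (Fin m → ℝ) → ℝ) (hρ_cont : Continuous ρ) (hρ_pos : ∀ x, 0 < ρ x)
    (χ : A → ℝ) (hχ_pos : ∀ g, 0 < χ g) (hχ_mul : ∀ g h : A, χ (g * h) = χ g * χ h)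
    (hequiv : ∀ g : A,
      Measure.map (act g) (volume.withDensity fun x => ENNReal.ofReal (ρ x)) =
        ENNReal.ofReal (χ g) • volume.withDensity fun x => ENNReal.ofReal (ρ x))
    (g : A) (x : Fin m → ℝ) (hfix : act g x = x) :
    (χ g)⁻¹ = |(fderiv ℝ (act g) x).det| := by
  set f := act g with hf
  set h := act g⁻¹ with hh
  have h1 : f ∘ h = id := by rw [hf, hh, ← hact_mul, mul_inv_cancel, hact_one]
  have h2 : h ∘ f = id := by rw [hf, hh, ← hact_mul, inv_mul_cancel, hact_one]
  have hhx : h x = x := by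
    have := congrFun h2 x
    simp only [Function.comp_apply, hfix, id_eq] at this
    exact this
  have hpre : ∀ s : Set (Fin m → ℝ), f ⁻¹' s = h '' s := by
    intro s
    ext y
    simp only [Set.mem_preimage, Set.mem_image]
    constructor
    · intro hy
      exact ⟨f y, hy, congrFun h2 y⟩
    · rintro ⟨z, hz, rfl⟩
      have : f (h z) = z := congrFun h1 z
      rwa [this]
  have hinj : Function.Injective h :=
    Function.LeftInverse.injective (g := f) (congrFun h1)
  have hdiff_h : Differentiable ℝ h := (hact_smooth g⁻¹).differentiable one_ne_zero
  have hdiff_f : Differentiable ℝ f := (hact_smooth g).differentiable one_ne_zero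
  -- change of variables on closed balls
  have key : ∀ r : ℝ, 0 < r →
      (∫⁻ y in Metric.closedBall x r,
        ENNReal.ofReal (|(fderiv ℝ h y).det| * ρ (h y))) =
      ∫⁻ y in Metric.closedBall x r, ENNReal.ofReal (χ g * ρ y) := by
    intro r hr
    have hs : MeasurableSet (Metric.closedBall x r) := measurableSet_closedBall
    have hmap := congrArg (fun μ : Measure (Fin m → ℝ) => μ (Metric.closedBall x r)) (hequiv g)
    simp only [Measure.smul_apply, smul_eq_mul] at hmap
    rw [Measure.map_apply (hact_smooth g).continuous.measurable hs,
      withDensity_apply _ ((hact_smooth g).continuous.measurable hs),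
      withDensity_apply _ hs, hpre,
      lintegral_image_eq_lintegral_abs_det_fderiv_mul volume hs
        (fun y _ => (hdiff_h y).hasFDerivAt.hasFDerivWithinAt) hinj.injOn
        (fun y => ENNReal.ofReal (ρ y))] at hmap
    calc (∫⁻ y in Metric.closedBall x r,
            ENNReal.ofReal (|(fderiv ℝ h y).det| * ρ (h y)))
        = ∫⁻ y in Metric.closedBall x r,
            ENNReal.ofReal |(fderiv ℝ h y).det| * ENNReal.ofReal (ρ (h y)) := by
          refine lintegral_congr fun y => ?_
          rw [ENNReal.ofReal_mul (abs_nonneg _)]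
      _ = ENNReal.ofReal (χ g) * ∫⁻ y in Metric.closedBall x r, ENNReal.ofReal (ρ y) := hmap
      _ = ∫⁻ y in Metric.closedBall x r, ENNReal.ofReal (χ g) * ENNReal.ofReal (ρ y) :=
          (lintegral_const_mul _ hρ_cont.measurable.ennreal_ofReal).symm
      _ = ∫⁻ y in Metric.closedBall x r, ENNReal.ofReal (χ g * ρ y) := by
          refine lintegral_congr fun y => ?_
          rw [ENNReal.ofReal_mul (hχ_pos g).le]
  -- continuity of the integrands
  have hcont_u : Continuous fun y => |(fderiv ℝ h y).det| * ρ (h y) :=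
    ((ContinuousLinearMap.continuous_det.comp
      ((hact_smooth g⁻¹).continuous_fderiv one_ne_zero)).abs).mul
      (hρ_cont.comp (hact_smooth g⁻¹).continuous)
  have hcont_v : Continuous fun y => χ g * ρ y := continuous_const.mul hρ_cont
  have heq : |(fderiv ℝ h x).det| * ρ (h x) = χ g * ρ x := by
    refine le_antisymm ?_ ?_
    · exact le_of_forall_lintegral_closedBall_eq _ _ hcont_u hcont_v
        (fun y => mul_nonneg (hχ_pos g).le (hρ_pos y).le) x key
    · exact le_of_forall_lintegral_closedBall_eq _ _ hcont_v hcont_u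
        (fun y => mul_nonneg (abs_nonneg _) (hρ_pos _).le) x (fun r hr => (key r hr).symm)
  rw [hhx] at heq
  have hdet_h : |(fderiv ℝ h x).det| = χ g := by
    have hρx := (hρ_pos x).ne'
    field_simp at heq
    exact heq
  -- chain rule: fderiv f x ∘ fderiv h x = id
  have hcomp : (fderiv ℝ f x).comp (fderiv ℝ h x) = ContinuousLinearMap.id ℝ _ := by
    have H1 : HasFDerivAt (f ∘ h) ((fderiv ℝ f x).comp (fderiv ℝ h x)) x := by
      have := (hdiff_f (h x)).hasFDerivAt.comp x (hdiff_h x).hasFDerivAt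
      rwa [hhx] at this
    rw [h1] at H1
    exact H1.unique (hasFDerivAt_id x)
  have hdetmul : (fderiv ℝ f x).det * (fderiv ℝ h x).det = 1 := by
    have := congrArg ContinuousLinearMap.det hcomp
    rwa [ContinuousLinearMap.det, ContinuousLinearMap.toLinearMap_comp, LinearMap.det_comp,
      ContinuousLinearMap.det, ContinuousLinearMap.coe_id, LinearMap.det_id] at this
  have habs : |(fderiv ℝ f x).det| * χ g = 1 := by
    rw [← hdet_h, ← abs_mul, hdetmul, abs_one]
  have hχne := (hχ_pos g).ne'
  field_simp
  linarith [habs]
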